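/- A Banach space X has property (m₁) if and only if X has the Schur property. (Property (m₁): for every x ∈ X and every weakly null sequence (x_n), limsup ‖x + x_n‖ = ‖x‖ + limsup ‖x_n‖.) -/

import Mathlib

open Filter Topology
noncomputable section

private lemma clusterPt_ge' {a b : ℝ} {g : ℕ → ℝ} (hcl : MapClusterPt a atTop g)
    (hev : ∀ᶠ k in atTop, b ≤ g k) : b ≤ a := by
  by_contra hab
  push_neg at hab
  have hfreq : ∃ᶠ k in atTop, g k < b :=
    mapClusterPt_iff_frequently.1 hcl _ (isOpen_Iio.mem_nhds hab)
  obtain ⟨k, hk1, hk2⟩ := (hfreq.and_eventually hev).exists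
  linarith

private lemma bounded_of_weakly_null' {X : Type*} [NormedAddCommGroup X] [NormedSpace ℝ X]
    (t : ℕ → X)
    (ht : ∀ f : StrongDual ℝ X, Tendsto (fun n => f (t n)) atTop (𝓝 0)) :
    ∃ M : ℝ, 0 < M ∧ ∀ n, ‖t n‖ ≤ M := by
  set g : ℕ → StrongDual ℝ X →L[ℝ] ℝ :=
    fun n => NormedSpace.inclusionInDoubleDual ℝ X (t n) with hg
  have hpt : ∀ f, ∃ C, ∀ n, ‖g n f‖ ≤ C := by
    intro f
    have hnt : Tendsto (fun n => ‖f (t n)‖) atTop (𝓝 0) := by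
      simpa using (ht f).norm
    obtain ⟨C, hC⟩ := hnt.bddAbove_range
    exact ⟨C, fun n => by
      simpa [hg, NormedSpace.dual_def] using hC ⟨n, rfl⟩⟩
  obtain ⟨C', hC'⟩ := banach_steinhaus hpt
  refine ⟨max C' 1, lt_of_lt_of_le one_pos (le_max_right _ _), fun n => ?_⟩
  have hnorm : ‖g n‖ = ‖t n‖ :=
    (NormedSpace.inclusionInDoubleDualLi ℝ (E := X)).norm_map (t n)
  calc ‖t n‖ = ‖g n‖ := hnorm.symm
    _ ≤ C' := hC' n
    _ ≤ max C' 1 := le_max_left _ _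

/-- A Banach space has property (m₁) iff it has the Schur property. -/
theorem property_m1_iff_schur {X : Type*} [NormedAddCommGroup X] [NormedSpace ℝ X]
    [CompleteSpace X] :
    (∀ (v : X) (s : ℕ → X),
        (∀ f : StrongDual ℝ X, Tendsto (fun n => f (s n)) atTop (𝓝 0)) →
        Filter.limsup (fun n => ‖v + s n‖) atTop =
          ‖v‖ + Filter.limsup (fun n => ‖s n‖) atTop) ↔
      ∀ (s : ℕ → X) (v : X),
        (∀ f : StrongDual ℝ X, Tendsto (fun n => f (s n)) atTop (𝓝 (f v))) →
        Tendsto s atTop (𝓝 v) := by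
  constructor
  · -- (m₁) → Schur
    intro h s v hs
    set t : ℕ → X := fun n => s n - v with ht_def
    have hweak : ∀ f : StrongDual ℝ X, Tendsto (fun n => f (t n)) atTop (𝓝 0) := by
      intro f
      have h1 : Tendsto (fun n => f (s n) - f v) atTop (𝓝 (f v - f v)) :=
        (hs f).sub tendsto_const_nhds
      simpa [ht_def, map_sub] using h1
    suffices hT : Tendsto t atTop (𝓝 0) by
      have h2 : Tendsto (fun n => t n + v) atTop (𝓝 (0 + v)) := hT.add tendsto_const_nhds
      simpa [ht_def] using h2
    obtain ⟨M, hMpos, hM⟩ := bounded_of_weakly_null' t hweak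
    have hbdd : IsBoundedUnder (· ≤ ·) atTop (fun n => ‖t n‖) :=
      isBoundedUnder_of ⟨M, fun n => hM n⟩
    have hbdd0 : IsBoundedUnder (· ≥ ·) atTop (fun n => ‖t n‖) :=
      isBoundedUnder_of ⟨0, fun n => norm_nonneg _⟩
    set c : ℝ := limsup (fun n => ‖t n‖) atTop with hc_def
    have hc0 : 0 ≤ c := by
      have hlil : 0 ≤ liminf (fun n => ‖t n‖) atTop :=
        le_liminf_of_le hbdd.isCoboundedUnder_ge
          (Eventually.of_forall fun n => norm_nonneg _)
      have := liminf_le_limsup (u := fun n => ‖t n‖) (f := atTop) hbdd hbdd0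
      linarith
    rcases eq_or_lt_of_le hc0 with hc | hc
    · -- limsup = 0 : norm tendsto 0
      have hlimsup : limsup (fun n => ‖t n‖) atTop = 0 := hc.symm ▸ rfl
      have hliminf : liminf (fun n => ‖t n‖) atTop = 0 := by
        have h1 : 0 ≤ liminf (fun n => ‖t n‖) atTop :=
          le_liminf_of_le hbdd.isCoboundedUnder_ge
            (Eventually.of_forall fun n => norm_nonneg _)
        have h2 := liminf_le_limsup (u := fun n => ‖t n‖) (f := atTop) hbdd hbdd0
        linarith [hlimsup]
      have := tendsto_of_liminf_eq_limsup hliminf hlimsup hbdd hbdd0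
      exact tendsto_zero_iff_norm_tendsto_zero.2 this
    · -- c > 0 : derive a contradiction
      exfalso
      -- key selection lemma
      have key : ∀ (m : ℕ) (w : X) (δ : ℝ), 0 < δ →
          ∃ n, m < n ∧ ‖t n‖ ≤ c + δ ∧ ‖w‖ + c - δ ≤ ‖w + t n‖ := by
        intro m w δ hδ
        have h1 : ∀ᶠ n in atTop, ‖t n‖ < c + δ :=
          eventually_lt_of_limsup_lt (by linarith [hc_def ▸ le_refl c] : limsup (fun n => ‖t n‖) atTop < c + δ) hbdd
        have hls : limsup (fun n => ‖w + t n‖) atTop = ‖w‖ + c := by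
          rw [h w t hweak]
        have hcob : IsCoboundedUnder (· ≤ ·) atTop (fun n => ‖w + t n‖) :=
          IsBoundedUnder.isCoboundedUnder_le
            (isBoundedUnder_of ⟨0, fun n => norm_nonneg _⟩)
        have h2 : ∃ᶠ n in atTop, ‖w‖ + c - δ < ‖w + t n‖ :=
          frequently_lt_of_lt_limsup hcob (by rw [hls]; linarith)
        obtain ⟨n, hn2, hn1, hnm⟩ :=
          (h2.and_eventually (h1.and (eventually_gt_atTop m))).exists
        exact ⟨n, hnm, le_of_lt hn1, le_of_lt hn2⟩
      choose pick hpick1 hpick2 hpick3 using key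
      set D : ℕ → ℝ := fun j => c / 2 ^ (j + 4) with hD_def
      have hDpos : ∀ j, 0 < D j := fun j => by positivity
      set g : ℕ → ℕ × X := fun j =>
        Nat.rec ((0 : ℕ), (0 : X))
          (fun j p => (pick p.1 p.2 (D j) (hDpos j),
            p.2 + t (pick p.1 p.2 (D j) (hDpos j)))) j with hg_def
      set N : ℕ → ℕ := fun j => (g j).1 with hN_def
      set V : ℕ → X := fun j => (g j).2 with hV_def
      have hgrec : ∀ j, g (j + 1) =
          (pick (N j) (V j) (D j) (hDpos j), V j + t (pick (N j) (V j) (D j) (hDpos j))) :=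
        fun j => rfl
      have hNrec : ∀ j, N (j + 1) = pick (N j) (V j) (D j) (hDpos j) := fun j => rfl
      have hVrec : ∀ j, V (j + 1) = V j + t (N (j + 1)) := fun j => rfl
      have hNmono : StrictMono N := by
        apply strictMono_nat_of_lt_succ
        intro j
        rw [hNrec j]
        exact hpick1 _ _ _ _
      have hnormt : ∀ j, ‖t (N (j + 1))‖ ≤ c + D j := by
        intro j
        rw [hNrec j]
        exact hpick2 _ _ _ _
      have hVlow : ∀ j, ‖V j‖ + c - D j ≤ ‖V (j + 1)‖ := by
        intro j
        rw [hVrec j, hNrec j]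
        exact hpick3 _ _ _ _
      have hDsum : ∀ k, ∑ i ∈ Finset.range k, D i ≤ c / 8 := by
        intro k
        have h1 : ∀ i, D i = c / 16 * (1 / 2) ^ i := by
          intro i
          have h2 : (2 : ℝ) ^ (i + 4) = 2 ^ i * 16 := by rw [pow_add]; norm_num
          simp only [hD_def, h2]
          have h3 : (2 : ℝ) ^ i ≠ 0 := by positivity
          field_simp
          rw [← mul_pow]; norm_num
        calc ∑ i ∈ Finset.range k, D i
            = c / 16 * ∑ i ∈ Finset.range k, (1 / 2 : ℝ) ^ i := by
              rw [Finset.mul_sum]; exact Finset.sum_congr rfl fun i _ => h1 i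
          _ ≤ c / 16 * 2 := by
              apply mul_le_mul_of_nonneg_left (sum_geometric_two_le k) (by positivity)
          _ ≤ c / 8 := by linarith
      have hVsum : ∀ k, V k = ∑ i ∈ Finset.range k, t (N (i + 1)) := by
        intro k
        induction k with
        | zero => simp [hV_def, hg_def]
        | succ k ih => rw [hVrec k, ih, Finset.sum_range_succ]
      have hVlower : ∀ k, ∑ i ∈ Finset.range k, (c - D i) ≤ ‖V k‖ := by
        intro k
        induction k with
        | zero => simp [hV_def, hg_def]
        | succ k ih =>
          rw [Finset.sum_range_succ]
          have := hVlow k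
          linarith
      have hVpos : ∀ k, (0 : ℝ) < ‖V (k + 1)‖ := by
        intro k
        have h1 := hVlower (k + 1)
        have h2 : (k + 1 : ℝ) * c - c / 8 ≤ ∑ i ∈ Finset.range (k + 1), (c - D i) := by
          rw [Finset.sum_sub_distrib, Finset.sum_const, Finset.card_range, nsmul_eq_mul]
          have := hDsum (k + 1)
          push_cast
          linarith
        have h3 : c ≤ (k + 1 : ℝ) * c := by
          nlinarith [Nat.cast_nonneg (α := ℝ) k]
        linarith
      have hVne : ∀ k, V (k + 1) ≠ 0 := fun k hk => by
        have := hVpos k; rw [hk, norm_zero] at this; linarith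
      choose F hF1 hF2 using fun k => exists_dual_vector ℝ (V (k + 1)) (norm_ne_zero_iff.2 (hVne k))
      -- key estimate: F k (t (N (j+1))) ≥ c/2 for j ≤ k
      have hFlow : ∀ k j, j < k + 1 → c / 2 ≤ F k (t (N (j + 1))) := by
        intro k j hjk
        have hjmem : j ∈ Finset.range (k + 1) := Finset.mem_range.2 hjk
        have hsum : ∑ i ∈ Finset.range (k + 1), F k (t (N (i + 1))) = ‖V (k + 1)‖ := by
          rw [← map_sum, ← hVsum (k + 1), hF2 k]
          simp
        have hsplit : F k (t (N (j + 1))) =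
            (∑ i ∈ Finset.range (k + 1), F k (t (N (i + 1)))) -
              ∑ i ∈ (Finset.range (k + 1)).erase j, F k (t (N (i + 1))) := by
          rw [← Finset.add_sum_erase _ _ hjmem]; ring
        have hub : ∀ i, F k (t (N (i + 1))) ≤ c + D i := by
          intro i
          calc F k (t (N (i + 1))) ≤ ‖F k (t (N (i + 1)))‖ := le_abs_self _
            _ ≤ ‖F k‖ * ‖t (N (i + 1))‖ := (F k).le_opNorm _
            _ = ‖t (N (i + 1))‖ := by rw [hF1 k, one_mul]
            _ ≤ c + D i := hnormt i
        have herase : ∑ i ∈ (Finset.range (k + 1)).erase j, F k (t (N (i + 1))) ≤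
            ∑ i ∈ (Finset.range (k + 1)).erase j, (c + D i) :=
          Finset.sum_le_sum fun i _ => hub i
        have herase2 : ∑ i ∈ (Finset.range (k + 1)).erase j, (c + D i) =
            (∑ i ∈ Finset.range (k + 1), (c + D i)) - (c + D j) := by
          rw [← Finset.add_sum_erase _ _ hjmem]; ring
        have hlower : ∑ i ∈ Finset.range (k + 1), (c - D i) ≤ ‖V (k + 1)‖ := hVlower (k + 1)
        have hDsum' : ∑ i ∈ Finset.range (k + 1), D i ≤ c / 8 := hDsum (k + 1)
        have hDj : D j ≤ c / 16 := by
          simp only [hD_def]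
          rw [div_le_div_iff₀ (by positivity) (by norm_num)]
          have h16 : (16 : ℝ) ≤ 2 ^ (j + 4) := by
            calc (16 : ℝ) = 2 ^ 4 := by norm_num
              _ ≤ 2 ^ (j + 4) := by
                apply pow_le_pow_right₀ (by norm_num); omega
          nlinarith
        have hsums : ∑ i ∈ Finset.range (k + 1), (c - D i) =
            (∑ i ∈ Finset.range (k + 1), (c + D i)) -
              2 * ∑ i ∈ Finset.range (k + 1), D i := by
          rw [Finset.sum_sub_distrib, Finset.sum_add_distrib]; ring
        rw [hsplit, hsum]
        have : (∑ i ∈ Finset.range (k + 1), (c + D i)) - (c + D j) ≥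
            ∑ i ∈ (Finset.range (k + 1)).erase j, F k (t (N (i + 1))) := by
          rw [← herase2]; exact herase
        nlinarith [hDpos j]
      -- weak-* cluster point
      set Φ : ℕ → WeakDual ℝ X := fun k => StrongDual.toWeakDual (F k) with hΦ_def
      have hΦball : ∀ k, Φ k ∈ WeakDual.toStrongDual ⁻¹' Metric.closedBall 0 1 := by
        intro k
        simp only [Set.mem_preimage, Metric.mem_closedBall, dist_zero_right]
        have : WeakDual.toStrongDual (Φ k) = F k := rfl
        rw [this, hF1 k]
      obtain ⟨φ, _, hφ⟩ := (WeakDual.isCompact_closedBall (𝕜 := ℝ) (E := X) 0 1).exists_mapClusterPt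
        (f := atTop) (u := Φ) (le_principal_iff.2 (mem_map.mpr (Eventually.of_forall hΦball)))
      have hφlow : ∀ j, c / 2 ≤ φ (t (N (j + 1))) := by
        intro j
        have hev : ∀ᶠ k in atTop, c / 2 ≤ Φ k (t (N (j + 1))) := by
          filter_upwards [eventually_ge_atTop j] with k hk
          exact hFlow k j (by omega)
        have hcl : MapClusterPt (φ (t (N (j + 1)))) atTop
            (fun k => Φ k (t (N (j + 1)))) :=
          hφ.continuousAt_comp (WeakDual.eval_continuous (t (N (j + 1)))).continuousAt
        exact clusterPt_ge' hcl hev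
      -- contradiction with weak nullity
      set f : StrongDual ℝ X := WeakDual.toStrongDual φ with hf_def
      have htend : Tendsto (fun j => f (t (N (j + 1)))) atTop (𝓝 0) := by
        apply (hweak f).comp
        have hsm : StrictMono fun j => N (j + 1) := fun a b hab =>
          hNmono (Nat.succ_lt_succ hab)
        exact hsm.tendsto_atTop
      have hge : c / 2 ≤ (0 : ℝ) :=
        ge_of_tendsto htend (Eventually.of_forall fun j => hφlow j)
      linarith
  · -- Schur → (m₁)
    intro hschur v s hs
    have h0 : Tendsto s atTop (𝓝 0) := by
      apply hschur s 0
      intro f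
      simpa using hs f
    have hn : Tendsto (fun n => ‖s n‖) atTop (𝓝 0) := by
      simpa using h0.norm
    have h1 : Tendsto (fun n => ‖v + s n‖) atTop (𝓝 ‖v‖) := by
      have h2 : Tendsto (fun n => v + s n) atTop (𝓝 (v + 0)) :=
        tendsto_const_nhds.add h0
      simpa using h2.norm
    rw [h1.limsup_eq, hn.limsup_eq, add_zero]
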